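/- arXiv:2112.14047 — 2 statements merged into one kernel-verified Lean document; each statement's English description precedes it below -/
import Mathlib

section
/- For a positive integer r, as x → ∞, sum_{k ≤ x} h_k^{(r)} = x^r log x / r! - ψ(r+1) x^r / r! + O(x^{r-1} log x). -/
open Filter Finset Asymptotics

/-- Hyperharmonic numbers: `hh 0 n = 1/n`, `hh (r+1) n = ∑_{k=1}^n hh r k`. -/
noncomputable def hh : ℕ → ℕ → ℝ
  | 0, n => 1 / n
  | r + 1, n => ∑ k ∈ Finset.Icc 1 n, hh r k

/-- Digamma function `ψ = Γ'/Γ` on the reals. -/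
noncomputable def digamma (x : ℝ) : ℝ := deriv Real.Gamma x / Real.Gamma x

lemma alg (a b c Hm Hr m1 r1 : ℝ) (hm : m1 ≠ 0) (hr : r1 ≠ 0)
    (h1 : c = a + b) (h2 : m1 * a = c * r1) :
    c * ((Hm + 1/m1) - (Hr + 1/r1)) = b * (Hm - (Hr + 1/r1)) + a * (Hm - Hr) := by
  subst h1
  field_simp
  linear_combination (-1 : ℝ) * h2

lemma harmonic_eq_sum (n : ℕ) : ((harmonic n : ℚ) : ℝ) = ∑ k ∈ Finset.Icc 1 n, (1 : ℝ) / k := by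
  induction n with
  | zero => simp
  | succ n ih =>
      rw [Finset.sum_Icc_succ_top (by omega : 1 ≤ n + 1), harmonic_succ, ← ih]
      push_cast
      ring

lemma hhA (r n : ℕ) : hh (r + 1) n =
    ((n + r).choose r : ℝ) * (((harmonic (n + r) : ℚ) : ℝ) - ((harmonic r : ℚ) : ℝ)) := by
  induction r generalizing n with
  | zero =>
      simp only [hh, Nat.add_zero, Nat.choose_zero_right, Nat.cast_one, harmonic_zero]
      rw [harmonic_eq_sum]
      push_cast
      simp [hh]
  | succ r ih =>
      induction n with
      | zero => simp [hh]
      | succ n ihn =>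
          have hstep : hh (r + 2) (n + 1) = hh (r + 2) n + hh (r + 1) (n + 1) := by
            show (∑ k ∈ Finset.Icc 1 (n+1), hh (r+1) k) = (∑ k ∈ Finset.Icc 1 n, hh (r+1) k) + _
            rw [Finset.sum_Icc_succ_top (by omega : 1 ≤ n + 1)]
          rw [hstep, ihn, ih (n + 1)]
          rw [show n + 1 + (r + 1) = n + r + 1 + 1 from by omega,
              show n + (r + 1) = n + r + 1 from by omega,
              show n + 1 + r = n + r + 1 from by omega,
              harmonic_succ (n + r + 1), harmonic_succ r]
          have hpascal : (((n + r + 1 + 1).choose (r + 1) : ℕ) : ℝ)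
              = ((n + r + 1).choose r : ℝ) + ((n + r + 1).choose (r + 1) : ℝ) := by
            rw [Nat.choose_succ_succ']; push_cast; ring
          have hrel : ((n : ℝ) + r + 2) * ((n + r + 1).choose r : ℝ)
              = (((n + r + 1 + 1).choose (r + 1)) : ℝ) * ((r : ℝ) + 1) := by
            have h := Nat.add_one_mul_choose_eq (n + r + 1) r
            have h2 := congrArg (fun m : ℕ => (m : ℝ)) h
            push_cast at h2
            linarith [h2]
          push_cast
          push_cast at hpascal hrel
          set c := (((n + r + 1 + 1).choose (r + 1) : ℕ) : ℝ) with hc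
          set a := (((n + r + 1).choose r : ℕ) : ℝ) with hA
          set b := (((n + r + 1).choose (r + 1) : ℕ) : ℝ) with hb
          set Hm := ((harmonic (n + r + 1) : ℚ) : ℝ) with hHm
          set Hr := ((harmonic r : ℚ) : ℝ) with hHr
          have hm0 : ((n : ℝ) + r + 1 + 1) ≠ 0 := by positivity
          have hr0 : ((r : ℝ) + 1) ≠ 0 := by positivity
          have hrel' : ((n:ℝ) + (r:ℝ) + 1 + 1) * a = c * ((r:ℝ) + 1) := by
            linear_combination hrel
          linear_combination (-1 : ℝ) * alg a b c Hm Hr ((n:ℝ) + (r:ℝ) + 1 + 1) ((r:ℝ) + 1) hm0 hr0 hpascal hrel'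

lemma chooseProd (r n : ℕ) : ((n + r).choose r : ℝ) * (r.factorial : ℝ)
    = ∏ i ∈ Finset.range r, ((n : ℝ) + i + 1) := by
  induction r with
  | zero => simp
  | succ r ih =>
      have h := Nat.add_one_mul_choose_eq (n + r) r
      have h2 := congrArg (fun m : ℕ => (m : ℝ)) h
      push_cast at h2
      rw [Finset.prod_range_succ, ← ih]
      rw [show n + (r + 1) = (n + r) + 1 from by omega]
      rw [Nat.factorial_succ]
      push_cast
      nlinarith [h2]

lemma powdiff (s : ℕ) (a b : ℝ) (ha : 0 ≤ a) (hab : a ≤ b) :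
    b ^ (s + 1) - a ^ (s + 1) ≤ (s + 1) * (b - a) * b ^ s := by
  induction s with
  | zero => norm_num
  | succ s ih =>
      have hb : 0 ≤ b := ha.trans hab
      have h1 : a ^ (s + 1) ≤ b ^ (s + 1) := pow_le_pow_left₀ ha hab _
      have h2 : b ^ (s + 2) - a ^ (s + 2) = b * (b ^ (s+1) - a ^ (s+1)) + a ^ (s+1) * (b - a) := by
        ring
      have h3 : b * (b ^ (s+1) - a ^ (s+1)) ≤ b * ((s + 1) * (b - a) * b ^ s) :=
        mul_le_mul_of_nonneg_left ih hb
      have h4 : a ^ (s+1) * (b - a) ≤ b ^ (s+1) * (b - a) :=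
        mul_le_mul_of_nonneg_right h1 (by linarith)
      have h5 : b * ((s + 1) * (b - a) * b ^ s) = (s+1) * (b - a) * b ^ (s+1) := by ring
      push_cast
      nlinarith [h2, h3, h4, h5]

lemma digamma_nat (r : ℕ) : digamma ((r : ℝ) + 1)
    = ((harmonic r : ℚ) : ℝ) - Real.eulerMascheroniConstant := by
  unfold digamma
  rw [Real.deriv_Gamma_nat r, Real.Gamma_nat_eq_factorial]
  have h : (r.factorial : ℝ) ≠ 0 := by positivity
  field_simp
  ring

set_option maxHeartbeats 1000000 in
theorem stmt7 (r : ℕ) (hr : 0 < r) :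
    (fun x : ℝ => (∑ k ∈ Finset.Icc 1 ⌊x⌋₊, hh r k)
        - x ^ r * Real.log x / r.factorial
        + digamma (r + 1) * x ^ r / r.factorial)
      =O[atTop] fun x : ℝ => x ^ (r - 1) * Real.log x := by
  obtain ⟨s, rfl⟩ : ∃ s, r = s + 1 := ⟨r - 1, by omega⟩
  set γ := Real.eulerMascheroniConstant with hγ
  set Hr : ℝ := ((harmonic (s + 1) : ℚ) : ℝ) with hHrdef
  rw [isBigO_iff]
  refine ⟨2^(s+1) * ((s:ℝ)+2) + 2^(s+1) * ((s:ℝ)+1)^2, ?_⟩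
  have hM : ∀ᶠ x : ℝ in atTop,
      (s:ℝ) + 2 ≤ x ∧ Real.exp (|γ - Hr| + 1) ≤ x := by
    filter_upwards [eventually_ge_atTop ((s:ℝ)+2), eventually_ge_atTop (Real.exp (|γ - Hr| + 1))]
      with x h1 h2 using ⟨h1, h2⟩
  filter_upwards [hM] with x hx
  obtain ⟨hxs, hxe⟩ := hx
  have hs0 : (0:ℝ) ≤ (s:ℝ) := Nat.cast_nonneg s
  have hx1 : (1:ℝ) ≤ x := by linarith
  have hx0 : (0:ℝ) < x := by linarith
  set L := Real.log x with hL
  have hLbig : |γ - Hr| + 1 ≤ L := by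
    rw [hL, ← Real.log_exp (|γ - Hr| + 1)]
    exact Real.log_le_log (Real.exp_pos _) hxe
  have hL1 : (1:ℝ) ≤ L := by linarith [abs_nonneg (γ - Hr)]
  set n := ⌊x⌋₊ with hn
  have hn1 : 1 ≤ n := Nat.le_floor (by exact_mod_cast hx1)
  have hnx : (n:ℝ) ≤ x := Nat.floor_le hx0.le
  have hxn : x < (n:ℝ) + 1 := Nat.lt_floor_add_one x
  set Hm : ℝ := ((harmonic (n + (s+1)) : ℚ) : ℝ) with hHmdef
  set B : ℝ := ∏ i ∈ Finset.range (s+1), ((n:ℝ) + i + 1) with hB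
  have hsum : (∑ k ∈ Finset.Icc 1 n, hh (s+1) k) = hh (s+1+1) n := rfl
  have hfac : ((s+1).factorial : ℝ) ≠ 0 := by positivity
  have hfac1 : (1:ℝ) ≤ ((s+1).factorial : ℝ) := by
    exact_mod_cast Nat.one_le_iff_ne_zero.mpr (Nat.factorial_ne_zero _)
  have hcp := chooseProd (s+1) n
  rw [← hB] at hcp
  have hdig : digamma (((s+1 : ℕ) : ℝ) + 1) = Hr - γ := by
    have h := digamma_nat (s+1)
    rw [hHrdef, hγ]
    exact_mod_cast h
  have key : ((∑ k ∈ Finset.Icc 1 n, hh (s+1) k)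
        - x ^ (s+1) * L / (s+1).factorial
        + digamma (((s+1 : ℕ) : ℝ) + 1) * x ^ (s+1) / (s+1).factorial)
      = (B * (Hm - γ - L) + (B - x^(s+1)) * (L + γ - Hr)) / ((s+1).factorial : ℝ) := by
    rw [hsum, hhA (s+1) n, hdig, eq_div_iff hfac]
    rw [← hHmdef, ← hHrdef]
    set C : ℝ := (((n + (s+1)).choose (s+1) : ℕ) : ℝ) with hC
    set F : ℝ := ((s+1).factorial : ℝ) with hF
    field_simp
    linear_combination (Hm - Hr) * hcp
  have hBl : x^(s+1) ≤ B := by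
    rw [hB]
    calc x^(s+1) = ∏ _i ∈ Finset.range (s+1), x := by
          rw [Finset.prod_const, Finset.card_range]
      _ ≤ ∏ i ∈ Finset.range (s+1), ((n:ℝ) + i + 1) := by
          apply Finset.prod_le_prod (fun i _ => hx0.le)
          intro i _
          have h0i : (0:ℝ) ≤ (i:ℝ) := by positivity
          linarith
  have hBu : B ≤ (x + ((s:ℝ)+1))^(s+1) := by
    rw [hB]
    calc (∏ i ∈ Finset.range (s+1), ((n:ℝ) + i + 1))
        ≤ ∏ _i ∈ Finset.range (s+1), (x + ((s:ℝ)+1)) := by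
          apply Finset.prod_le_prod
          · intro i _; positivity
          · intro i hi
            have his : (i:ℝ) ≤ (s:ℝ) := by
              exact_mod_cast Nat.lt_succ_iff.mp (Finset.mem_range.mp hi)
            linarith
      _ = (x + ((s:ℝ)+1))^(s+1) := by rw [Finset.prod_const, Finset.card_range]
  have h2x : x + ((s:ℝ)+1) ≤ 2*x := by linarith
  have hBu2 : B ≤ (2*x)^(s+1) :=
    hBu.trans (pow_le_pow_left₀ (by positivity) h2x _)
  have hlog_lb : 0 ≤ Hm - γ - L := by
    have h1 := Real.eulerMascheroniConstant_lt_eulerMascheroniSeq' (n + (s+1))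
    rw [Real.eulerMascheroniSeq', if_neg (by omega)] at h1
    have h2 : L ≤ Real.log (((n + (s+1) : ℕ) : ℝ)) := by
      apply Real.log_le_log hx0
      push_cast
      linarith
    rw [← hγ, ← hHmdef] at h1
    linarith
  have hlog_ub : Hm - γ - L ≤ ((s:ℝ)+2)/x := by
    have h1 := Real.eulerMascheroniSeq_lt_eulerMascheroniConstant (n + (s+1))
    rw [Real.eulerMascheroniSeq] at h1
    rw [← hγ, ← hHmdef] at h1
    have hdiv : Real.log ((((n + (s+1) : ℕ) : ℝ) + 1)/x)
        = Real.log (((n + (s+1) : ℕ) : ℝ) + 1) - L :=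
      Real.log_div (by positivity) (ne_of_gt hx0)
    have hle : Real.log ((((n + (s+1) : ℕ) : ℝ) + 1)/x) ≤ (((n + (s+1) : ℕ) : ℝ) + 1)/x - 1 :=
      Real.log_le_sub_one_of_pos (by positivity)
    have hfrac : (((n + (s+1) : ℕ) : ℝ) + 1)/x - 1 ≤ ((s:ℝ)+2)/x := by
      have he : (((n + (s+1) : ℕ) : ℝ) + 1)/x - 1 - ((s:ℝ)+2)/x = ((n:ℝ) - x)/x := by
        push_cast
        field_simp
        ring
      have hnp : ((n:ℝ) - x)/x ≤ 0 := div_nonpos_iff.mpr (Or.inr ⟨by linarith, hx0.le⟩)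
      linarith
    linarith
  have hpd : B - x^(s+1) ≤ ((s:ℝ)+1)*((s:ℝ)+1)*(2*x)^s := by
    have h1 := powdiff s x (x + ((s:ℝ)+1)) hx0.le (by linarith)
    have h2 : (x + ((s:ℝ)+1)) - x = (s:ℝ)+1 := by ring
    have h3 : (x + ((s:ℝ)+1))^s ≤ (2*x)^s := pow_le_pow_left₀ (by positivity) h2x _
    have h4 : ((s:ℝ)+1)*((s:ℝ)+1)*(x + ((s:ℝ)+1))^s ≤ ((s:ℝ)+1)*((s:ℝ)+1)*(2*x)^s := by
      apply mul_le_mul_of_nonneg_left h3 (by positivity)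
    rw [h2] at h1
    nlinarith [hBu]
  have hpd0 : 0 ≤ B - x^(s+1) := by linarith
  have habs2 : |L + γ - Hr| ≤ 2*L := by
    have hgr := abs_le.mp (le_trans (by linarith : |γ - Hr| ≤ |γ - Hr| + 1) hLbig)
    rw [abs_le]
    constructor <;> linarith [hgr.1, hgr.2, hL1]
  have hT1 : |B * (Hm - γ - L)| ≤ 2^(s+1) * ((s:ℝ)+2) * x^s := by
    rw [abs_of_nonneg (mul_nonneg (le_trans (by positivity) hBl) hlog_lb)]
    have h1 : B * (Hm - γ - L) ≤ (2*x)^(s+1) * (((s:ℝ)+2)/x) :=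
      mul_le_mul hBu2 hlog_ub hlog_lb (by positivity)
    have hxsx : x^(s+1)/x = x^s := by
      rw [pow_succ, mul_div_assoc, div_self (ne_of_gt hx0), mul_one]
    have h2 : (2*x)^(s+1) * (((s:ℝ)+2)/x) = 2^(s+1) * ((s:ℝ)+2) * x^s := by
      calc (2*x)^(s+1) * (((s:ℝ)+2)/x) = 2^(s+1) * ((s:ℝ)+2) * (x^(s+1)/x) := by
            rw [mul_pow]; ring
        _ = 2^(s+1) * ((s:ℝ)+2) * x^s := by rw [hxsx]
    linarith
  have hT2 : |(B - x^(s+1)) * (L + γ - Hr)| ≤ 2^(s+1) * ((s:ℝ)+1)^2 * (x^s * L) := by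
    rw [abs_mul, abs_of_nonneg hpd0]
    calc (B - x^(s+1)) * |L + γ - Hr|
        ≤ (((s:ℝ)+1)*((s:ℝ)+1)*(2*x)^s) * (2*L) := by
          apply mul_le_mul hpd habs2 (abs_nonneg _) (by positivity)
      _ = 2^(s+1) * ((s:ℝ)+1)^2 * (x^s * L) := by
          rw [mul_pow]; ring
  have hnorm : ‖x ^ (s + 1 - 1) * L‖ = x^s * L := by
    have hss : s + 1 - 1 = s := by omega
    rw [hss, Real.norm_eq_abs, abs_of_nonneg (by positivity)]
  rw [hnorm]
  have hxsL : x^s ≤ x^s * L := by nlinarith [pow_nonneg hx0.le s]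
  calc ‖(∑ k ∈ Finset.Icc 1 ⌊x⌋₊, hh (s+1) k)
        - x ^ (s+1) * Real.log x / (s+1).factorial
        + digamma (((s+1 : ℕ) : ℝ) + 1) * x ^ (s+1) / (s+1).factorial‖
      = |B * (Hm - γ - L) + (B - x^(s+1)) * (L + γ - Hr)| / ((s+1).factorial : ℝ) := by
        rw [Real.norm_eq_abs, ← hn, ← hL, key, abs_div,
          abs_of_nonneg (by positivity : (0:ℝ) ≤ ((s+1).factorial : ℝ))]
    _ ≤ |B * (Hm - γ - L) + (B - x^(s+1)) * (L + γ - Hr)| :=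
        div_le_self (abs_nonneg _) hfac1
    _ ≤ |B * (Hm - γ - L)| + |(B - x^(s+1)) * (L + γ - Hr)| := abs_add_le _ _
    _ ≤ 2^(s+1) * ((s:ℝ)+2) * x^s + 2^(s+1) * ((s:ℝ)+1)^2 * (x^s * L) := by
        linarith
    _ ≤ (2^(s+1) * ((s:ℝ)+2) + 2^(s+1) * ((s:ℝ)+1)^2) * (x^s * L) := by
        have hA0 : (0:ℝ) ≤ 2^(s+1) * ((s:ℝ)+2) := by positivity
        have hmono := mul_le_mul_of_nonneg_left hxsL hA0
        linarith
end

section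
/- The harmonic Stieltjes constant γ_H(0) := lim_{x→∞}( sum_{n ≤ x} H_n/n - (ln x)^2/2 - γ ln x ) equals γ²/2 + ζ(2)/2. -/
open Filter Finset Real

/-- Harmonic numbers `H n = ∑_{k=1}^n 1/k`. -/
noncomputable def harm (n : ℕ) : ℝ := ∑ k ∈ Finset.Icc 1 n, (1 : ℝ) / k

lemma harm_succ (n : ℕ) : harm (n + 1) = harm n + 1 / (n + 1) := by
  rw [harm, harm, Finset.sum_Icc_succ_top (Nat.le_add_left 1 n)]
  push_cast
  ring

lemma harm_eq_harmonic (n : ℕ) : harm n = (harmonic n : ℝ) := by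
  induction n with
  | zero => simp [harm]
  | succ n ih =>
    rw [harm_succ, harmonic_succ, ih]
    push_cast
    ring

lemma harm_nonneg (n : ℕ) : 0 ≤ harm n :=
  Finset.sum_nonneg fun k _ => by positivity

lemma key_identity (N : ℕ) : ∑ n ∈ Finset.Icc 1 N, harm n / n
    = ((harm N) ^ 2 + ∑ k ∈ Finset.Icc 1 N, (1 : ℝ) / (k : ℝ) ^ 2) / 2 := by
  induction N with
  | zero => simp [harm]
  | succ N ih =>
    rw [Finset.sum_Icc_succ_top (Nat.le_add_left 1 N),
        Finset.sum_Icc_succ_top (Nat.le_add_left 1 N), ih, harm_succ]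
    have h : ((N : ℝ) + 1) ≠ 0 := by positivity
    push_cast
    field_simp
    ring

theorem stmt17 :
    Tendsto (fun x : ℝ => (∑ n ∈ Finset.Icc 1 ⌊x⌋₊, harm n / n)
        - (Real.log x) ^ 2 / 2 - Real.eulerMascheroniConstant * Real.log x)
      atTop (nhds (Real.eulerMascheroniConstant ^ 2 / 2 + (π ^ 2 / 6) / 2)) := by
  set γ := Real.eulerMascheroniConstant with hγdef
  have hγ0 : 0 ≤ γ := le_of_lt (lt_trans (by norm_num) Real.one_half_lt_eulerMascheroniConstant)
  -- the partial sums of 1/k^2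
  have hS : Tendsto (fun N : ℕ => ∑ k ∈ Finset.Icc 1 N, (1 : ℝ) / (k : ℝ) ^ 2)
      atTop (nhds (π ^ 2 / 6)) := by
    have h := hasSum_zeta_two.tendsto_sum_nat
    have heq : ∀ N : ℕ, ∑ k ∈ Finset.Icc 1 N, (1 : ℝ) / (k : ℝ) ^ 2
        = ∑ k ∈ Finset.range (N + 1), (1 : ℝ) / (k : ℝ) ^ 2 := by
      intro N
      rw [Finset.range_eq_Ico, Finset.sum_eq_sum_Ico_succ_bot (Nat.succ_pos N)]
      rw [← Finset.Ico_add_one_right_eq_Icc]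
      norm_num
    exact ((h.comp (tendsto_add_atTop_nat 1)).congr fun N => (heq N).symm)
  have h1 : Tendsto (fun x : ℝ => γ ^ 2 / 2
      + (∑ k ∈ Finset.Icc 1 ⌊x⌋₊, (1 : ℝ) / (k : ℝ) ^ 2) / 2)
      atTop (nhds (γ ^ 2 / 2 + (π ^ 2 / 6) / 2)) :=
    tendsto_const_nhds.add ((hS.comp tendsto_nat_floor_atTop).div_const 2)
  have h2 : Tendsto (fun x : ℝ => (harm ⌊x⌋₊ - Real.log x - γ)
      * (harm ⌊x⌋₊ + Real.log x + γ) / 2) atTop (nhds 0) := by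
    apply squeeze_zero_norm' (a := fun x : ℝ => (2 * Real.log x + 2 * γ + 1) / x)
    · filter_upwards [eventually_ge_atTop (2 : ℝ)] with x hx
      set N := ⌊x⌋₊ with hN
      have hx1 : (1 : ℝ) ≤ x := by linarith
      have hx0 : (0 : ℝ) < x := by linarith
      have hN1 : 1 ≤ N := Nat.le_floor (by exact_mod_cast hx1)
      have hN0 : (0 : ℝ) < N := by exact_mod_cast hN1
      have hN1' : (1 : ℝ) ≤ N := by exact_mod_cast hN1
      have hNx : (N : ℝ) ≤ x := Nat.floor_le (le_of_lt hx0)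
      have hxN : x < (N : ℝ) + 1 := Nat.lt_floor_add_one x
      set d := Real.log ((N : ℝ) + 1) - Real.log N with hd
      have hd1 : d ≤ 1 / N := by
        rw [hd, ← Real.log_div (by positivity) (by positivity)]
        have := Real.log_le_sub_one_of_pos (show (0:ℝ) < ((N:ℝ)+1)/N by positivity)
        calc Real.log (((N : ℝ) + 1) / N) ≤ ((N : ℝ) + 1) / N - 1 := this
          _ = 1 / N := by field_simp; ring
      have ha : 0 ≤ harm N - Real.log N - γ := by
        have := Real.eulerMascheroniConstant_lt_eulerMascheroniSeq' N
        rw [Real.eulerMascheroniSeq'] at this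
        rw [if_neg (by omega : ¬ N = 0)] at this
        rw [harm_eq_harmonic]
        linarith
      have hb : harm N - Real.log N - γ ≤ d := by
        have := Real.eulerMascheroniSeq_lt_eulerMascheroniConstant N
        rw [Real.eulerMascheroniSeq] at this
        rw [harm_eq_harmonic, hd]
        linarith
      have hc : 0 ≤ Real.log x - Real.log N := by
        have := Real.log_le_log hN0 hNx
        linarith
      have hcd : Real.log x - Real.log N ≤ d := by
        have := Real.log_le_log hx0 (le_of_lt hxN)
        rw [hd]; linarith
      have hu : |harm N - Real.log x - γ| ≤ 1 / N := by
        rw [abs_le]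
        constructor <;> nlinarith
      have hlogx : 0 ≤ Real.log x := Real.log_nonneg hx1
      have hlogN : Real.log N ≤ Real.log x := by linarith
      have hv0 : 0 ≤ harm N + Real.log x + γ := by
        have := harm_nonneg N
        linarith
      have hvle : harm N + Real.log x + γ ≤ 2 * Real.log x + 2 * γ + 1 := by
        have h1N : 1 / (N : ℝ) ≤ 1 := by
          rw [div_le_one hN0]; exact hN1'
        nlinarith
      have hx2N : x ≤ 2 * N := by nlinarith
      rw [Real.norm_eq_abs, abs_div, abs_mul, abs_of_nonneg hv0]
      have step1 : |harm N - Real.log x - γ| * (harm N + Real.log x + γ) / |(2:ℝ)|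
          ≤ (1 / N) * (harm N + Real.log x + γ) / 2 := by
        rw [abs_two]
        gcongr
      refine step1.trans ?_
      have step2 : (1 / (N : ℝ)) * (harm N + Real.log x + γ) / 2
          = (harm N + Real.log x + γ) / (2 * N) := by
        rw [one_div_mul_eq_div, div_div, mul_comm]
      rw [step2]
      calc (harm N + Real.log x + γ) / (2 * N)
          ≤ (harm N + Real.log x + γ) / x := by
            apply div_le_div_of_nonneg_left hv0 hx0 hx2N
        _ ≤ (2 * Real.log x + 2 * γ + 1) / x := by gcongr
    · have h := Real.tendsto_pow_log_div_mul_add_atTop 1 0 1 one_ne_zero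
      have h' : Tendsto (fun x : ℝ => Real.log x / x) atTop (nhds 0) := by
        refine h.congr fun x => ?_
        simp
      have := (h'.const_mul 2).add ((tendsto_inv_atTop_zero (𝕜 := ℝ)).const_mul (2 * γ + 1))
      simp only [mul_zero, zero_add, add_zero] at this
      refine this.congr fun x => ?_
      field_simp
      ring
  have hmain := h2.add h1
  rw [zero_add] at hmain
  refine hmain.congr fun x => ?_
  rw [key_identity]
  ring
end
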